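/- arXiv:1811.00230 — 2 statements merged into one kernel-verified Lean document; each statement's English description precedes it below -/
import Mathlib

section
/- Let G be a finite connected, non-complete strongly regular graph with parameters (v, k, a1, c2), and set b1 = k − a1 − 1. Then h_G ≤ max(b1/(k+1), c2/k). -/
open Finset Matrix

/-- `E[S,T]`: the number of ordered pairs `(x, y)` with `x ∈ S`, `y ∈ T` and `x, y` adjacent. -/
def eB {V : Type} [Fintype V] [DecidableEq V] (G : SimpleGraph V) [DecidableRel G.Adj]
    (S T : Finset V) : ℕ :=
  ((S ×ˢ T).filter fun p => G.Adj p.1 p.2).card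

/-- The Cheeger constant of a `k`-regular graph `G`: the infimum of
`E[S,Sᶜ] / (k·|S|)` over nonempty vertex subsets `S` with `2·|S| ≤ |V|`. -/
noncomputable def cheeger {V : Type} [Fintype V] [DecidableEq V] (G : SimpleGraph V)
    [DecidableRel G.Adj] (k : ℕ) : ℝ :=
  sInf {x : ℝ | ∃ S : Finset V, S.Nonempty ∧ 2 * S.card ≤ Fintype.card V ∧
    x = (eB G S Sᶜ : ℝ) / (k * S.card)}

/-- `θ` is an eigenvalue of the adjacency matrix of `G`. -/
def IsAdjEigenvalue {V : Type} [Fintype V] [DecidableEq V] (G : SimpleGraph V)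
    [DecidableRel G.Adj] (θ : ℝ) : Prop :=
  ∃ f : V → ℝ, f ≠ 0 ∧ G.adjMatrix ℝ *ᵥ f = θ • f

/-- `θ` is the second-largest adjacency eigenvalue of the connected `k`-regular graph `G`,
i.e. the largest eigenvalue distinct from the top eigenvalue `k`
(which has multiplicity one for connected graphs). -/
def IsSecondLargestAdjEigenvalue {V : Type} [Fintype V] [DecidableEq V] (G : SimpleGraph V)
    [DecidableRel G.Adj] (k : ℕ) (θ : ℝ) : Prop :=
  IsAdjEigenvalue G θ ∧ θ ≠ (k : ℝ) ∧ ∀ μ : ℝ, IsAdjEigenvalue G μ → μ ≠ (k : ℝ) → μ ≤ θ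

lemma eB_eq_sum {V : Type} [Fintype V] [DecidableEq V] (G : SimpleGraph V) [DecidableRel G.Adj]
    (S T : Finset V) : eB G S T = ∑ a ∈ S, (T.filter (G.Adj a)).card := by
  unfold eB
  rw [Finset.card_eq_sum_card_fiberwise (f := Prod.fst) (t := S) (by
    intro p hp; exact (Finset.mem_product.1 (Finset.mem_filter.1 hp).1).1)]
  refine Finset.sum_congr rfl fun a ha => ?_
  refine Finset.card_bij (fun p _ => p.2) ?_ ?_ ?_
  · intro p hp
    simp only [Finset.mem_filter, Finset.mem_product] at hp ⊢
    obtain ⟨⟨⟨h1, h2⟩, h3⟩, h4⟩ := hp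
    subst h4
    exact ⟨h2, h3⟩
  · intro p hp q hq h
    simp only [Finset.mem_filter] at hp hq
    exact Prod.ext (hp.2.trans hq.2.symm) h
  · intro b hb
    simp only [Finset.mem_filter, Finset.mem_product] at hb ⊢
    exact ⟨(a, b), ⟨⟨⟨ha, hb.1⟩, hb.2⟩, rfl⟩, rfl⟩

/-- A finite connected non-complete strongly regular graph with parameters `(v, k, a1, c2)`
satisfies `h_G ≤ max (b1/(k+1)) (c2/k)`, where `b1 = k - a1 - 1`. -/
theorem stmt_6 {V : Type} [Fintype V] [DecidableEq V] (G : SimpleGraph V) [DecidableRel G.Adj]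
    (v k a1 c2 : ℕ) (hsrg : G.IsSRGWith v k a1 c2)
    (hconn : G.Connected) (hnc : G ≠ ⊤) :
    cheeger G k ≤ max (((k : ℝ) - (a1 : ℝ) - 1) / ((k : ℝ) + 1)) ((c2 : ℝ) / (k : ℝ)) := by
  classical
  obtain ⟨x⟩ := hconn.nonempty
  -- at least two vertices
  have hV2 : 2 ≤ Fintype.card V := by
    by_contra h
    push_neg at h
    have hss : Subsingleton V := Fintype.card_le_one_iff_subsingleton.1 (by omega)
    apply hnc
    ext a b
    simp only [SimpleGraph.top_adj]
    constructor
    · intro hab; exact absurd (Subsingleton.elim a b) hab.ne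
    · intro hab; exact absurd (Subsingleton.elim a b) hab
  -- k ≥ 1
  have hk1 : 1 ≤ k := by
    obtain ⟨y, hyx⟩ := Fintype.exists_ne_of_one_lt_card (by omega) x
    obtain ⟨w⟩ := hconn.preconnected x y
    cases w with
    | nil => exact absurd rfl hyx
    | cons h p =>
      have hpos : 0 < G.degree x := G.degree_pos_iff_exists_adj x |>.2 ⟨_, h⟩
      have := hsrg.regular x
      omega
  have hNcard : (G.neighborFinset x).card = k := by
    rw [G.card_neighborFinset_eq_degree]; exact hsrg.regular x
  have hxN : x ∉ G.neighborFinset x := by simp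
  set N := G.neighborFinset x with hN
  set S := insert x N with hS
  have hScard : S.card = k + 1 := by
    rw [hS, Finset.card_insert_of_notMem hxN, hNcard]
  have hcommonAdj : ∀ a : V, G.Adj a x → (G.neighborFinset a ∩ N).card = a1 := by
    intro a hax
    have hset : G.neighborFinset a ∩ N = (G.commonNeighbors a x).toFinset := by
      ext b; simp [hN, SimpleGraph.mem_commonNeighbors]
    rw [hset, Set.toFinset_card, hsrg.of_adj a x hax]
  have hcommonNot : ∀ z : V, z ≠ x → ¬G.Adj z x → (G.neighborFinset z ∩ N).card = c2 := by
    intro z hzx hz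
    have hset : G.neighborFinset z ∩ N = (G.commonNeighbors z x).toFinset := by
      ext b; simp [hN, SimpleGraph.mem_commonNeighbors]
    rw [hset, Set.toFinset_card, hsrg.of_not_adj hzx hz]
  -- a1 + 1 ≤ k
  have ha1 : a1 + 1 ≤ k := by
    obtain ⟨y, hyN⟩ : N.Nonempty := by rw [← Finset.card_pos, hN, hNcard]; omega
    have hAdjxy : G.Adj x y := by rwa [hN, SimpleGraph.mem_neighborFinset] at hyN
    have h1 : (G.neighborFinset y ∩ N).card = a1 := hcommonAdj y hAdjxy.symm
    have hsub : G.neighborFinset y ∩ N ⊆ N.erase y := by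
      intro b hb
      rw [Finset.mem_inter] at hb
      refine Finset.mem_erase.2 ⟨?_, hb.2⟩
      intro hby
      subst hby
      exact G.irrefl ((SimpleGraph.mem_neighborFinset _ _ _).1 hb.1)
    have hle := Finset.card_le_card hsub
    rw [Finset.card_erase_of_mem hyN, hNcard, h1] at hle
    omega
  -- edges out of S
  have hEB : eB G S Sᶜ = k * (k - (a1 + 1)) := by
    rw [eB_eq_sum, hS, Finset.sum_insert hxN]
    have h0 : ((insert x N)ᶜ.filter (G.Adj x)).card = 0 := by
      rw [Finset.card_eq_zero, Finset.filter_eq_empty_iff]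
      intro b hb hadj
      rw [Finset.mem_compl] at hb
      exact hb (Finset.mem_insert_of_mem ((SimpleGraph.mem_neighborFinset _ _ _).2 hadj))
    rw [h0, zero_add]
    rw [Finset.sum_congr rfl (g := fun _ => k - (a1 + 1)) (fun a ha => ?_),
      Finset.sum_const, hNcard, smul_eq_mul]
    · have hax : G.Adj a x := ((SimpleGraph.mem_neighborFinset _ _ _).1 ha).symm
      have hfa : (insert x N)ᶜ.filter (G.Adj a) = G.neighborFinset a \ insert x N := by
        ext b
        simp only [Finset.mem_filter, Finset.mem_compl, Finset.mem_sdiff,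
          SimpleGraph.mem_neighborFinset]
        tauto
      have hint : G.neighborFinset a ∩ insert x N = insert x (G.neighborFinset a ∩ N) := by
        ext b
        simp only [Finset.mem_inter, Finset.mem_insert]
        constructor
        · rintro ⟨h1, h2 | h2⟩
          · exact Or.inl h2
          · exact Or.inr ⟨h1, h2⟩
        · rintro (rfl | ⟨h1, h2⟩)
          · exact ⟨(SimpleGraph.mem_neighborFinset _ _ _).2 hax, Or.inl rfl⟩
          · exact ⟨h1, Or.inr h2⟩
      have hxnaN : x ∉ G.neighborFinset a ∩ N := fun h => hxN (Finset.mem_inter.1 h).2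
      have hintcard : (G.neighborFinset a ∩ insert x N).card = a1 + 1 := by
        rw [hint, Finset.card_insert_of_notMem hxnaN, hcommonAdj a hax]
      have hpart := Finset.card_inter_add_card_sdiff (G.neighborFinset a) (insert x N)
      have hka : (G.neighborFinset a).card = k := by
        rw [G.card_neighborFinset_eq_degree]; exact hsrg.regular a
      rw [hfa]
      show (G.neighborFinset a \ insert x N).card = k - (a1 + 1)
      omega
  -- the set is bounded below
  have hbdd : BddBelow {r : ℝ | ∃ S : Finset V, S.Nonempty ∧ 2 * S.card ≤ Fintype.card V ∧
      r = (eB G S Sᶜ : ℝ) / (k * S.card)} := by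
    refine ⟨0, fun r hr => ?_⟩
    obtain ⟨T, _, _, rfl⟩ := hr
    positivity
  have hk0 : (k : ℝ) ≠ 0 := Nat.cast_ne_zero.2 (by omega)
  by_cases hcase : 2 * (k + 1) ≤ Fintype.card V
  · -- use S
    have hmem : ((eB G S Sᶜ : ℝ) / (k * S.card)) ∈ {r : ℝ | ∃ S : Finset V, S.Nonempty ∧
        2 * S.card ≤ Fintype.card V ∧ r = (eB G S Sᶜ : ℝ) / (k * S.card)} :=
      ⟨S, ⟨x, by rw [hS]; exact Finset.mem_insert_self x N⟩, by rw [hScard]; exact hcase, rfl⟩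
    refine le_trans (csInf_le hbdd hmem) (le_trans ?_ (le_max_left _ _))
    rw [hEB, hScard]
    have hc : ((k - (a1 + 1) : ℕ) : ℝ) = (k : ℝ) - (a1 : ℝ) - 1 := by
      rw [Nat.cast_sub ha1]; push_cast; ring
    push_cast [hc]
    rw [mul_div_mul_left _ _ hk0]
  · -- use Sᶜ
    have hnc2 : ∃ a b : V, a ≠ b ∧ ¬G.Adj a b := by
      by_contra h
      push_neg at h
      apply hnc
      ext a b
      simp only [SimpleGraph.top_adj]
      exact ⟨fun hab => hab.ne, fun hab => h a b hab⟩
    obtain ⟨a, b, hab, hnadj⟩ := hnc2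
    have hkV : k + 2 ≤ Fintype.card V := by
      have hsub : G.neighborFinset a ⊆ (Finset.univ.erase b).erase a := by
        intro c hc
        rw [SimpleGraph.mem_neighborFinset] at hc
        refine Finset.mem_erase.2 ⟨hc.ne', Finset.mem_erase.2 ⟨?_, Finset.mem_univ c⟩⟩
        rintro rfl
        exact hnadj hc
      have hle := Finset.card_le_card hsub
      rw [Finset.card_erase_of_mem (Finset.mem_erase.2 ⟨hab, Finset.mem_univ a⟩),
        Finset.card_erase_of_mem (Finset.mem_univ b), Finset.card_univ] at hle
      have hka : (G.neighborFinset a).card = k := by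
        rw [G.card_neighborFinset_eq_degree]; exact hsrg.regular a
      omega
    have hSc : Sᶜ.card = Fintype.card V - (k + 1) := by
      rw [Finset.card_compl, hScard]
    have hEB2 : eB G Sᶜ Sᶜᶜ = (Fintype.card V - (k + 1)) * c2 := by
      rw [compl_compl, eB_eq_sum]
      rw [Finset.sum_congr rfl (g := fun _ => c2) (fun z hz => ?_), Finset.sum_const, hSc,
        smul_eq_mul]
      have hzS : z ∉ S := by rwa [← Finset.mem_compl]
      have hzx : z ≠ x := by rintro rfl; exact hzS (by rw [hS]; exact Finset.mem_insert_self z N)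
      have hznadj : ¬G.Adj z x := fun h => hzS (by
        rw [hS]
        exact Finset.mem_insert_of_mem ((SimpleGraph.mem_neighborFinset _ _ _).2 h.symm))
      have hfz : S.filter (G.Adj z) = G.neighborFinset z ∩ N := by
        ext c
        simp only [hS, Finset.mem_filter, Finset.mem_insert, Finset.mem_inter,
          SimpleGraph.mem_neighborFinset]
        constructor
        · rintro ⟨rfl | hc, hzc⟩
          · exact absurd hzc hznadj
          · exact ⟨hzc, hc⟩
        · rintro ⟨h1, h2⟩
          exact ⟨Or.inr h2, h1⟩
      rw [hfz, hcommonNot z hzx hznadj]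
    have hm1 : 1 ≤ Fintype.card V - (k + 1) := by omega
    refine le_trans (csInf_le hbdd ⟨Sᶜ, ?_, ?_, rfl⟩) (le_trans ?_ (le_max_right _ _))
    · rw [← Finset.card_pos, hSc]; omega
    · push_neg at hcase; omega
    · rw [hEB2, hSc]
      have hm0 : ((Fintype.card V - (k + 1) : ℕ) : ℝ) ≠ 0 := Nat.cast_ne_zero.2 (by omega)
      push_cast
      rw [mul_comm, mul_div_mul_right _ _ hm0]
end

section
/- Let G be a finite bipartite distance-regular graph of diameter 3 with valency k, and let θ1 be the second-largest eigenvalue of its adjacency matrix. Then h_G ≤ (k − θ1)/k. -/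
set_option linter.unusedSectionVars false

open Finset Matrix

section Aux

variable {V : Type} [Fintype V] [DecidableEq V] {G : SimpleGraph V} [DecidableRel G.Adj]

/-! ### basic counting conversions -/

lemma natCard_filter (p : V → Prop) [DecidablePred p] :
    Nat.card {z : V | p z} = (univ.filter p).card := by
  simp [Nat.card_eq_fintype_card, Fintype.card_subtype]

lemma double_sum (s : Finset V) (p : V → V → Prop)
    [∀ a b, Decidable (p a b)] (g : V → ℝ) :
    ∑ y ∈ s, ∑ z ∈ univ.filter (p y), g z = ∑ z, ((s.filter fun y => p y z).card : ℝ) * g z := by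
  simp_rw [Finset.sum_filter]
  rw [Finset.sum_comm]
  refine Finset.sum_congr rfl fun z _ => ?_
  rw [← Finset.sum_filter, Finset.sum_const, nsmul_eq_mul]

lemma sum_split (dx : V → ℕ) (hd : ∀ z, dx z ≤ 3) (g : V → ℝ) :
    ∑ z, g z = (∑ z ∈ univ.filter (fun z => dx z = 0), g z)
      + (∑ z ∈ univ.filter (fun z => dx z = 1), g z)
      + (∑ z ∈ univ.filter (fun z => dx z = 2), g z)
      + (∑ z ∈ univ.filter (fun z => dx z = 3), g z) := by
  have h : ∑ i ∈ Finset.range 4, ∑ z ∈ univ.filter (fun z => dx z = i), g z = ∑ z, g z :=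
    Finset.sum_fiberwise_of_maps_to (fun z _ => Finset.mem_range.mpr (Nat.lt_succ_of_le (hd z))) g
  rw [← h]
  simp [Finset.sum_range_succ]

/-! ### parity -/

lemma walk_parity {A : Set V} (hA : ∀ x y : V, G.Adj x y → (x ∈ A ↔ y ∉ A))
    {u v : V} (w : G.Walk u v) : ((u ∈ A) ↔ (v ∈ A)) ↔ Even w.length := by
  induction w with
  | nil => simp
  | cons h p ih =>
    rw [SimpleGraph.Walk.length_cons, Nat.even_add_one, ← ih]
    have := hA _ _ h
    tauto

lemma dist_parity (hconn : G.Connected) {A : Set V}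
    (hA : ∀ x y : V, G.Adj x y → (x ∈ A ↔ y ∉ A)) (u v : V) :
    ((u ∈ A) ↔ (v ∈ A)) ↔ Even (G.dist u v) := by
  obtain ⟨p, hp⟩ := hconn.exists_walk_length_eq_dist u v
  rw [← hp]; exact walk_parity hA p

/-! ### geodesics -/

lemma dist_pred (hconn : G.Connected) {x y : V} {n : ℕ} (h : G.dist x y = n + 1) :
    ∃ w : V, G.Adj w y ∧ G.dist x w = n := by
  have hxy : x ≠ y := by
    intro he; rw [he, SimpleGraph.dist_self] at h; omega
  obtain ⟨p, hp⟩ := hconn.exists_walk_length_eq_dist y x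
  obtain ⟨w, hadj, p', rfl⟩ := p.exists_eq_cons_of_ne hxy.symm
  rw [SimpleGraph.Walk.length_cons, SimpleGraph.dist_comm, h] at hp
  refine ⟨w, hadj.symm, le_antisymm ?_ ?_⟩
  · calc G.dist x w = G.dist w x := SimpleGraph.dist_comm ..
    _ ≤ p'.length := SimpleGraph.dist_le p'
    _ = n := by omega
  · have h1 : G.dist w y ≤ 1 := by
      rw [SimpleGraph.dist_comm]
      exact le_of_eq (SimpleGraph.dist_eq_one_iff_adj.mpr hadj)
    have h2 := hconn.dist_triangle (u := x) (v := w) (w := y)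
    omega

end Aux

/-- `G` is distance-regular of diameter `D` with intersection numbers `b i`, `c i`:
for every pair of vertices `x, y` at graph distance `i ≤ D`, the vertex `y` has exactly
`c i` neighbors at distance `i - 1` from `x` and exactly `b i` neighbors at distance
`i + 1` from `x`. -/
def IsDistRegular {V : Type} [Fintype V] (G : SimpleGraph V) (D : ℕ) (b c : ℕ → ℕ) : Prop :=
  ∀ i ≤ D, ∀ x y : V, G.dist x y = i →
    Nat.card {z : V | G.Adj y z ∧ G.dist x z = i - 1} = c i ∧
    Nat.card {z : V | G.Adj y z ∧ G.dist x z = i + 1} = b i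

section Classes

variable {V : Type} [Fintype V] [DecidableEq V] {G : SimpleGraph V} [DecidableRel G.Adj]
  {b c : ℕ → ℕ} {k : ℕ} {A : Set V}

lemma filter_dist_zero (hconn : G.Connected) (x : V) :
    univ.filter (fun z => G.dist x z = 0) = {x} := by
  ext z
  simp [hconn.dist_eq_zero_iff, eq_comm]

lemma filter_dist_one (x : V) :
    univ.filter (fun z => G.dist x z = 1) = G.neighborFinset x := by
  ext z
  simp [SimpleGraph.dist_eq_one_iff_adj, SimpleGraph.mem_neighborFinset]

lemma deg_eq (hdrg : IsDistRegular G 3 b c) (hk : b 0 = k) (x : V) :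
    (G.neighborFinset x).card = k := by
  have h := (hdrg 0 (by norm_num) x x (SimpleGraph.dist_self)).2
  rw [natCard_filter] at h
  rw [← hk, ← h]
  congr 1
  ext z
  simp only [SimpleGraph.mem_neighborFinset, mem_filter, mem_univ, true_and, zero_add]
  exact ⟨fun h => ⟨h, SimpleGraph.dist_eq_one_iff_adj.mpr h⟩, fun h => h.1⟩

lemma c2_count (hdrg : IsDistRegular G 3 b c) {x z : V} (h : G.dist x z = 2) :
    (univ.filter fun y => G.Adj x y ∧ G.Adj y z).card = c 2 := by
  have h2 := (hdrg 2 (by norm_num) x z h).1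
  rw [natCard_filter] at h2
  rw [← h2]
  congr 1
  ext y
  simp only [mem_filter, mem_univ, true_and]
  constructor
  · rintro ⟨h1, h2'⟩
    exact ⟨h2'.symm, SimpleGraph.dist_eq_one_iff_adj.mpr h1⟩
  · rintro ⟨h1, h2'⟩
    exact ⟨SimpleGraph.dist_eq_one_iff_adj.mp h2', h1.symm⟩

lemma N2_self (hdrg : IsDistRegular G 3 b c) (hk : b 0 = k) (x : V) :
    (univ.filter fun y => G.Adj x y ∧ G.Adj y x).card = k := by
  rw [← deg_eq hdrg hk x]
  congr 1
  ext y
  simp only [SimpleGraph.mem_neighborFinset, mem_filter, mem_univ, true_and]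
  exact ⟨fun h => h.1, fun h => ⟨h, h.symm⟩⟩

lemma N2_d1 (hA : ∀ x y : V, G.Adj x y → (x ∈ A ↔ y ∉ A)) {x z : V} (hadj : G.Adj x z) :
    (univ.filter fun y => G.Adj x y ∧ G.Adj y z).card = 0 := by
  rw [Finset.card_eq_zero, Finset.filter_eq_empty_iff]
  rintro y - ⟨h1, h2⟩
  have e1 := hA x y h1
  have e2 := hA y z h2
  have e3 := hA x z hadj
  tauto

lemma N2_d3 (hconn : G.Connected) {x z : V} (h : G.dist x z = 3) :
    (univ.filter fun y => G.Adj x y ∧ G.Adj y z).card = 0 := by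
  rw [Finset.card_eq_zero, Finset.filter_eq_empty_iff]
  rintro y - ⟨h1, h2⟩
  have t := hconn.dist_triangle (u := x) (v := y) (w := z)
  have d1 : G.dist x y = 1 := SimpleGraph.dist_eq_one_iff_adj.mpr h1
  have d2 : G.dist y z = 1 := SimpleGraph.dist_eq_one_iff_adj.mpr h2
  omega

lemma CM_d0 (x : V) :
    (univ.filter fun w => G.Adj x w ∧ G.dist w x = 2).card = 0 := by
  rw [Finset.card_eq_zero, Finset.filter_eq_empty_iff]
  rintro w - ⟨h1, h2⟩
  rw [SimpleGraph.dist_comm] at h2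
  rw [SimpleGraph.dist_eq_one_iff_adj.mpr h1] at h2
  omega

lemma CM_d1 (hconn : G.Connected) (hA : ∀ x y : V, G.Adj x y → (x ∈ A ↔ y ∉ A))
    (hdrg : IsDistRegular G 3 b c) (hk : b 0 = k) {x z : V} (h : G.dist x z = 1) :
    (univ.filter fun w => G.Adj x w ∧ G.dist w z = 2).card = k - 1 := by
  have hadj : G.Adj x z := SimpleGraph.dist_eq_one_iff_adj.mp h
  have : univ.filter (fun w => G.Adj x w ∧ G.dist w z = 2) = (G.neighborFinset x).erase z := by
    ext w
    simp only [mem_filter, mem_univ, true_and, Finset.mem_erase, SimpleGraph.mem_neighborFinset]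
    constructor
    · rintro ⟨h1, h2⟩
      refine ⟨fun he => ?_, h1⟩
      rw [he, SimpleGraph.dist_self] at h2
      omega
    · rintro ⟨hne, h1⟩
      refine ⟨h1, ?_⟩
      have hev : Even (G.dist w z) := by
        apply (dist_parity hconn hA w z).mp
        have e1 := hA x w h1
        have e2 := hA x z hadj
        tauto
      have ht : G.dist w z ≤ G.dist w x + G.dist x z := hconn.dist_triangle
      have hwx : G.dist w x = 1 := SimpleGraph.dist_eq_one_iff_adj.mpr h1.symm
      have hne0 : G.dist w z ≠ 0 := fun h0 => hne (hconn.dist_eq_zero_iff.mp h0)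
      rw [Nat.even_iff] at hev
      omega
  rw [this, Finset.card_erase_of_mem (by simp [SimpleGraph.mem_neighborFinset, hadj]), deg_eq hdrg hk]

lemma CM_d2 (hconn : G.Connected) (hA : ∀ x y : V, G.Adj x y → (x ∈ A ↔ y ∉ A))
    {x z : V} (h : G.dist x z = 2) :
    (univ.filter fun w => G.Adj x w ∧ G.dist w z = 2).card = 0 := by
  rw [Finset.card_eq_zero, Finset.filter_eq_empty_iff]
  rintro w - ⟨h1, h2⟩
  have hxz : (x ∈ A) ↔ (z ∈ A) := (dist_parity hconn hA x z).mpr (by rw [h]; decide)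
  have hwz : (w ∈ A) ↔ (z ∈ A) := (dist_parity hconn hA w z).mpr (by rw [h2]; decide)
  have e1 := hA x w h1
  tauto

lemma CM_d3 (hconn : G.Connected) (hA : ∀ x y : V, G.Adj x y → (x ∈ A ↔ y ∉ A))
    (hdiam1 : ∀ u v : V, G.dist u v ≤ 3)
    (hdrg : IsDistRegular G 3 b c) (hk : b 0 = k) {x z : V} (h : G.dist x z = 3) :
    (univ.filter fun w => G.Adj x w ∧ G.dist w z = 2).card = k := by
  have : univ.filter (fun w => G.Adj x w ∧ G.dist w z = 2) = G.neighborFinset x := by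
    ext w
    simp only [mem_filter, mem_univ, true_and, SimpleGraph.mem_neighborFinset]
    refine ⟨fun h' => h'.1, fun h1 => ⟨h1, ?_⟩⟩
    have hev : Even (G.dist w z) := by
      apply (dist_parity hconn hA w z).mp
      have hxz : ¬((x ∈ A) ↔ (z ∈ A)) := by
        rw [dist_parity hconn hA x z, h]
        decide
      have e1 := hA x w h1
      tauto
    have ht : G.dist x z ≤ G.dist x w + G.dist w z := hconn.dist_triangle
    have hxw : G.dist x w = 1 := SimpleGraph.dist_eq_one_iff_adj.mpr h1
    have hle := hdiam1 w z
    rw [Nat.even_iff] at hev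
    omega
  rw [this, deg_eq hdrg hk]

end Classes

section Spectral

variable {V : Type} [Fintype V] [DecidableEq V] {G : SimpleGraph V} [DecidableRel G.Adj]
  {b c : ℕ → ℕ} {k : ℕ} {A : Set V}

lemma spectral_key (hconn : G.Connected) (hdrg : IsDistRegular G 3 b c) (hk : b 0 = k)
    (hk1 : 1 ≤ k) (hdiam1 : ∀ u v : V, G.dist u v ≤ 3)
    (hA : ∀ x y : V, G.Adj x y → (x ∈ A ↔ y ∉ A))
    {θ : ℝ} (hev : IsAdjEigenvalue G θ) (hθk : θ ≠ (k : ℝ)) :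
    (θ + k) * (θ ^ 2 - ((k : ℝ) - (c 2 : ℝ))) = 0 := by
  obtain ⟨f, hf0, hf⟩ := hev
  have hE : ∀ x, ∑ y ∈ G.neighborFinset x, f y = θ * f x := by
    intro x
    have h := congrFun hf x
    rwa [SimpleGraph.adjMatrix_mulVec_apply, Pi.smul_apply, smul_eq_mul] at h
  -- the sum of f is zero
  have hdegf : ∀ z : V, ((univ.filter fun y => G.Adj y z).card : ℝ) = (k : ℝ) := by
    intro z
    have : univ.filter (fun y => G.Adj y z) = G.neighborFinset z := by
      ext y
      simp [SimpleGraph.neighborFinset_eq_filter, G.adj_comm]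
    rw [this, deg_eq hdrg hk]
  have hsum : ∑ z, f z = 0 := by
    have h1 : ∑ x, ∑ y ∈ G.neighborFinset x, f y = θ * ∑ x, f x := by
      rw [Finset.mul_sum]
      exact Finset.sum_congr rfl fun x _ => hE x
    have h2 : ∑ x, ∑ y ∈ G.neighborFinset x, f y = (k : ℝ) * ∑ z, f z := by
      simp_rw [SimpleGraph.neighborFinset_eq_filter]
      rw [double_sum univ G.Adj f, Finset.mul_sum]
      exact Finset.sum_congr rfl fun z _ => by rw [hdegf z]
    have h3 : (θ - (k : ℝ)) * ∑ z, f z = 0 := by linear_combination h2 - h1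
    exact (mul_eq_zero.mp h3).resolve_left (sub_ne_zero.mpr hθk)
  set s2 : V → ℝ := fun x => ∑ z ∈ univ.filter (fun z => G.dist x z = 2), f z with hs2
  set s3 : V → ℝ := fun x => ∑ z ∈ univ.filter (fun z => G.dist x z = 3), f z with hs3
  -- F2
  have F2 : ∀ x, θ ^ 2 * f x = (k : ℝ) * f x + (c 2 : ℝ) * s2 x := by
    intro x
    have lhs1 : ∑ y ∈ G.neighborFinset x, ∑ z ∈ G.neighborFinset y, f z = θ ^ 2 * f x := by
      calc ∑ y ∈ G.neighborFinset x, ∑ z ∈ G.neighborFinset y, f z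
          = ∑ y ∈ G.neighborFinset x, θ * f y := Finset.sum_congr rfl fun y _ => hE y
        _ = θ * (θ * f x) := by rw [← Finset.mul_sum, hE x]
        _ = θ ^ 2 * f x := by ring
    have lhs2 : ∑ y ∈ G.neighborFinset x, ∑ z ∈ G.neighborFinset y, f z
        = ∑ z, ((univ.filter fun y => G.Adj x y ∧ G.Adj y z).card : ℝ) * f z := by
      simp_rw [SimpleGraph.neighborFinset_eq_filter]
      rw [double_sum (univ.filter (G.Adj x)) G.Adj f]
      refine Finset.sum_congr rfl fun z _ => ?_
      rw [Finset.filter_filter]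
    rw [← lhs1, lhs2,
      sum_split (G.dist x) (hdiam1 x) (fun z => ((univ.filter fun y => G.Adj x y ∧ G.Adj y z).card : ℝ) * f z)]
    have e0 : ∑ z ∈ univ.filter (fun z => G.dist x z = 0),
        ((univ.filter fun y => G.Adj x y ∧ G.Adj y z).card : ℝ) * f z = (k : ℝ) * f x := by
      rw [filter_dist_zero hconn x, Finset.sum_singleton, N2_self hdrg hk x]
    have e1 : ∑ z ∈ univ.filter (fun z => G.dist x z = 1),
        ((univ.filter fun y => G.Adj x y ∧ G.Adj y z).card : ℝ) * f z = 0 := by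
      refine Finset.sum_eq_zero fun z hz => ?_
      rw [mem_filter] at hz
      rw [N2_d1 hA (SimpleGraph.dist_eq_one_iff_adj.mp hz.2)]
      simp
    have e2 : ∑ z ∈ univ.filter (fun z => G.dist x z = 2),
        ((univ.filter fun y => G.Adj x y ∧ G.Adj y z).card : ℝ) * f z = (c 2 : ℝ) * s2 x := by
      rw [hs2, Finset.mul_sum]
      refine Finset.sum_congr rfl fun z hz => ?_
      rw [mem_filter] at hz
      rw [c2_count hdrg hz.2]
    have e3 : ∑ z ∈ univ.filter (fun z => G.dist x z = 3),
        ((univ.filter fun y => G.Adj x y ∧ G.Adj y z).card : ℝ) * f z = 0 := by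
      refine Finset.sum_eq_zero fun z hz => ?_
      rw [mem_filter] at hz
      rw [N2_d3 hconn hz.2]
      simp
    rw [e0, e1, e2, e3]
    ring
  -- F3
  have F3 : ∀ x, θ ^ 3 * f x
      = (k : ℝ) * θ * f x + (c 2 : ℝ) * (((k : ℝ) - 1) * (θ * f x) + (k : ℝ) * s3 x) := by
    intro x
    have lhs1 : ∑ y ∈ G.neighborFinset x, (θ ^ 2 * f y) = θ ^ 3 * f x := by
      rw [← Finset.mul_sum, hE x]; ring
    have lhs2 : ∑ y ∈ G.neighborFinset x, (θ ^ 2 * f y)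
        = (k : ℝ) * (θ * f x) + (c 2 : ℝ) * ∑ y ∈ G.neighborFinset x, s2 y := by
      calc ∑ y ∈ G.neighborFinset x, (θ ^ 2 * f y)
          = ∑ y ∈ G.neighborFinset x, ((k : ℝ) * f y + (c 2 : ℝ) * s2 y) :=
            Finset.sum_congr rfl fun y _ => F2 y
        _ = (k : ℝ) * ∑ y ∈ G.neighborFinset x, f y
            + (c 2 : ℝ) * ∑ y ∈ G.neighborFinset x, s2 y := by
            rw [Finset.sum_add_distrib, Finset.mul_sum, Finset.mul_sum]
        _ = (k : ℝ) * (θ * f x) + (c 2 : ℝ) * ∑ y ∈ G.neighborFinset x, s2 y := by rw [hE x]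
    have lhs3 : ∑ y ∈ G.neighborFinset x, s2 y
        = ((k : ℝ) - 1) * (θ * f x) + (k : ℝ) * s3 x := by
      have step : ∑ y ∈ G.neighborFinset x, s2 y
          = ∑ z, ((univ.filter fun y => G.Adj x y ∧ G.dist y z = 2).card : ℝ) * f z := by
        rw [hs2]
        simp_rw [SimpleGraph.neighborFinset_eq_filter]
        rw [double_sum (univ.filter (G.Adj x)) (fun y z => G.dist y z = 2) f]
        refine Finset.sum_congr rfl fun z _ => ?_
        rw [Finset.filter_filter]
      rw [step,
        sum_split (G.dist x) (hdiam1 x) (fun z => ((univ.filter fun y => G.Adj x y ∧ G.dist y z = 2).card : ℝ) * f z)]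
      have e0 : ∑ z ∈ univ.filter (fun z => G.dist x z = 0),
          ((univ.filter fun y => G.Adj x y ∧ G.dist y z = 2).card : ℝ) * f z = 0 := by
        rw [filter_dist_zero hconn x, Finset.sum_singleton, CM_d0 x]
        simp
      have e1 : ∑ z ∈ univ.filter (fun z => G.dist x z = 1),
          ((univ.filter fun y => G.Adj x y ∧ G.dist y z = 2).card : ℝ) * f z
          = ((k : ℝ) - 1) * (θ * f x) := by
        have : ∀ z ∈ univ.filter (fun z => G.dist x z = 1),
            ((univ.filter fun y => G.Adj x y ∧ G.dist y z = 2).card : ℝ) * f z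
            = ((k : ℝ) - 1) * f z := by
          intro z hz
          rw [mem_filter] at hz
          rw [CM_d1 hconn hA hdrg hk hz.2, Nat.cast_sub hk1, Nat.cast_one]
        rw [Finset.sum_congr rfl this, ← Finset.mul_sum, filter_dist_one, hE x]
      have e2 : ∑ z ∈ univ.filter (fun z => G.dist x z = 2),
          ((univ.filter fun y => G.Adj x y ∧ G.dist y z = 2).card : ℝ) * f z = 0 := by
        refine Finset.sum_eq_zero fun z hz => ?_
        rw [mem_filter] at hz
        rw [CM_d2 hconn hA hz.2]
        simp
      have e3 : ∑ z ∈ univ.filter (fun z => G.dist x z = 3),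
          ((univ.filter fun y => G.Adj x y ∧ G.dist y z = 2).card : ℝ) * f z
          = (k : ℝ) * s3 x := by
        rw [hs3, Finset.mul_sum]
        refine Finset.sum_congr rfl fun z hz => ?_
        rw [mem_filter] at hz
        rw [CM_d3 hconn hA hdiam1 hdrg hk hz.2]
      rw [e0, e1, e2, e3]
      ring
    rw [← lhs1, lhs2, lhs3]
    ring
  -- F4
  have F4 : ∀ x, f x + θ * f x + s2 x + s3 x = 0 := by
    intro x
    have h := sum_split (G.dist x) (hdiam1 x) f
    rw [hsum, filter_dist_zero hconn x, Finset.sum_singleton, filter_dist_one, hE x] at h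
    rw [hs2, hs3]
    linarith [h]
  obtain ⟨x, hx⟩ := Function.ne_iff.mp hf0
  have hx' : f x ≠ 0 := by simpa using hx
  have key : ((θ + k) * (θ ^ 2 - ((k : ℝ) - (c 2 : ℝ)))) * f x = 0 := by
    have e2 := F2 x
    have e3 := F3 x
    have e4 := F4 x
    linear_combination e3 + (k : ℝ) * e2 + ((c 2 : ℝ) * (k : ℝ)) * e4
  exact (mul_eq_zero.mp key).resolve_right hx'

end Spectral

section EBlemmas

variable {V : Type} [Fintype V] [DecidableEq V] {G : SimpleGraph V} [DecidableRel G.Adj]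
  {b c : ℕ → ℕ} {k : ℕ} {A : Set V}

lemma eB_comm (S T : Finset V) : eB G S T = eB G T S := by
  unfold eB
  refine Finset.card_bij' (fun p _ => (p.2, p.1)) (fun p _ => (p.2, p.1)) ?_ ?_ ?_ ?_
  · rintro ⟨a, b⟩ h
    simp only [mem_filter, mem_product] at h ⊢
    exact ⟨⟨h.1.2, h.1.1⟩, h.2.symm⟩
  · rintro ⟨a, b⟩ h
    simp only [mem_filter, mem_product] at h ⊢
    exact ⟨⟨h.1.2, h.1.1⟩, h.2.symm⟩
  · rintro ⟨a, b⟩ _; rfl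
  · rintro ⟨a, b⟩ _; rfl

lemma eB_fst_fiber (S T : Finset V) :
    eB G S T = ∑ a ∈ S, (T.filter (fun t => G.Adj a t)).card := by
  unfold eB
  rw [Finset.card_eq_sum_card_fiberwise (f := Prod.fst) (t := S)
    (fun p hp => (Finset.mem_product.mp (Finset.mem_filter.mp hp).1).1)]
  refine Finset.sum_congr rfl fun a ha => ?_
  refine Finset.card_bij' (fun p _ => p.2) (fun t _ => (a, t)) ?_ ?_ ?_ ?_
  · rintro ⟨a', t⟩ h
    simp only [mem_filter, mem_product] at h ⊢
    obtain ⟨⟨⟨-, ht⟩, hadj⟩, rfl⟩ := h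
    exact ⟨ht, hadj⟩
  · intro t h
    simp only [mem_filter, mem_product] at h ⊢
    exact ⟨⟨⟨ha, h.1⟩, h.2⟩, by simp⟩
  · rintro ⟨a', t⟩ h
    simp only [mem_filter] at h
    obtain ⟨-, rfl⟩ := h
    rfl
  · intro t _; rfl

lemma eB_snd_fiber (S T : Finset V) :
    eB G S T = ∑ t ∈ T, (S.filter (fun a => G.Adj a t)).card := by
  rw [eB_comm]
  rw [eB_fst_fiber]
  refine Finset.sum_congr rfl fun t _ => ?_
  congr 1
  ext a
  simp [G.adj_comm]

lemma eB_univ_right (hdrg : IsDistRegular G 3 b c) (hk : b 0 = k) (S : Finset V) :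
    eB G S univ = k * S.card := by
  rw [eB_fst_fiber]
  rw [Finset.sum_congr rfl (fun a _ => ?_), Finset.sum_const, smul_eq_mul, mul_comm]
  show (univ.filter (fun t => G.Adj a t)).card = k
  rw [← deg_eq hdrg hk a, SimpleGraph.neighborFinset_eq_filter]

lemma eB_split (S T : Finset V) : eB G S Tᶜ + eB G S T = eB G S univ := by
  unfold eB
  rw [← Finset.card_union_of_disjoint]
  · congr 1
    ext ⟨a, t⟩
    simp only [Finset.mem_union, mem_filter, mem_product, Finset.mem_compl, mem_univ]
    tauto
  · rw [Finset.disjoint_left]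
    rintro ⟨a, t⟩ h1 h2
    simp only [mem_filter, mem_product, Finset.mem_compl] at h1 h2
    exact h1.1.2 h2.1.2

lemma eB_mono {S T S' T' : Finset V} (hS : S ⊆ S') (hT : T ⊆ T') :
    eB G S T ≤ eB G S' T' := by
  unfold eB
  apply Finset.card_le_card
  apply Finset.filter_subset_filter
  exact Finset.product_subset_product hS hT

lemma cheeger_le_of_subset (hdrg : IsDistRegular G 3 b c) (hk : b 0 = k) (hk1 : 1 ≤ k)
    {S : Finset V} (hne : S.Nonempty) (hhalf : 2 * S.card ≤ Fintype.card V) {θ : ℝ}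
    (hθ : θ * S.card ≤ (eB G S S : ℝ)) :
    cheeger G k ≤ ((k : ℝ) - θ) / k := by
  have hmem : (eB G S Sᶜ : ℝ) / (k * S.card) ∈ {x : ℝ | ∃ S' : Finset V, S'.Nonempty ∧
      2 * S'.card ≤ Fintype.card V ∧ x = (eB G S' S'ᶜ : ℝ) / (k * S'.card)} :=
    ⟨S, hne, hhalf, rfl⟩
  have hbdd : BddBelow {x : ℝ | ∃ S' : Finset V, S'.Nonempty ∧
      2 * S'.card ≤ Fintype.card V ∧ x = (eB G S' S'ᶜ : ℝ) / (k * S'.card)} := by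
    refine ⟨0, ?_⟩
    rintro x ⟨S', -, -, rfl⟩
    positivity
  refine le_trans (csInf_le hbdd hmem) ?_
  have hsplitn : eB G S Sᶜ + eB G S S = k * S.card := by
    rw [eB_split S S, eB_univ_right hdrg hk]
  have hsplit : (eB G S Sᶜ : ℝ) = (k : ℝ) * S.card - eB G S S := by
    have := congrArg (fun n : ℕ => (n : ℝ)) hsplitn
    push_cast at this
    linarith
  have hS0 : 0 < (S.card : ℝ) := by
    have := Finset.card_pos.mpr hne
    exact_mod_cast this
  have hk0 : (0 : ℝ) < k := by exact_mod_cast hk1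
  rw [hsplit, div_le_div_iff₀ (by positivity) hk0]
  have hc : (0 : ℝ) ≤ (S.card : ℝ) := le_of_lt hS0
  nlinarith [hθ, hS0, hk0]

lemma exists_top_subset (B : Finset V) (g : V → ℕ) (m : ℕ) (hm : m ≤ B.card) :
    ∃ L ⊆ B, L.card = m ∧ m * ∑ x ∈ B, g x ≤ B.card * ∑ x ∈ L, g x := by
  have H : ∀ (n : ℕ) (B : Finset V), n ≤ B.card →
      ∃ L ⊆ B, L.card = n ∧ ∀ a ∈ L, ∀ x ∈ B \ L, g x ≤ g a := by
    intro n
    induction n with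
    | zero => exact fun B _ => ⟨∅, Finset.empty_subset _, Finset.card_empty, by simp⟩
    | succ n ih =>
      intro B hB
      have hBne : B.Nonempty := Finset.card_pos.mp (by omega)
      obtain ⟨a, haB, hamax⟩ := Finset.exists_max_image B g hBne
      obtain ⟨L', hL'sub, hL'card, hL'max⟩ := ih (B.erase a)
        (by rw [Finset.card_erase_of_mem haB]; omega)
      have haL' : a ∉ L' := fun h => (Finset.mem_erase.mp (hL'sub h)).1 rfl
      refine ⟨insert a L', ?_, ?_, ?_⟩
      · intro t ht
        rcases Finset.mem_insert.mp ht with rfl | ht'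
        · exact haB
        · exact Finset.erase_subset a B (hL'sub ht')
      · rw [Finset.card_insert_of_notMem haL', hL'card]
      · intro t ht x hx
        rw [Finset.mem_sdiff, Finset.mem_insert] at hx
        push_neg at hx
        rcases Finset.mem_insert.mp ht with rfl | ht'
        · exact hamax x hx.1
        · apply hL'max t ht' x
          rw [Finset.mem_sdiff, Finset.mem_erase]
          exact ⟨⟨hx.2.1, hx.1⟩, hx.2.2⟩
  obtain ⟨L, hsub, hcard, hmax⟩ := H m B hm
  refine ⟨L, hsub, hcard, ?_⟩
  have key : L.card * ∑ x ∈ B \ L, g x ≤ (B \ L).card * ∑ a ∈ L, g a := by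
    calc L.card * ∑ x ∈ B \ L, g x = ∑ _a ∈ L, ∑ x ∈ B \ L, g x := by
          rw [Finset.sum_const, smul_eq_mul]
      _ ≤ ∑ a ∈ L, ∑ _x ∈ B \ L, g a := by
          refine Finset.sum_le_sum fun a ha => ?_
          refine Finset.sum_le_sum fun x hx => hmax a ha x hx
      _ = (B \ L).card * ∑ a ∈ L, g a := by
          rw [Finset.mul_sum]
          exact Finset.sum_congr rfl fun a _ => by rw [Finset.sum_const, smul_eq_mul, mul_comm]
  have hsplit : ∑ x ∈ B, g x = ∑ x ∈ B \ L, g x + ∑ x ∈ L, g x :=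
    (Finset.sum_sdiff hsub).symm
  have hcards : (B \ L).card = B.card - L.card := Finset.card_sdiff_of_subset hsub
  have hle : L.card ≤ B.card := Finset.card_le_card hsub
  calc m * ∑ x ∈ B, g x = L.card * ∑ x ∈ B \ L, g x + L.card * ∑ x ∈ L, g x := by
        rw [hcard, hsplit, Nat.mul_add]
    _ ≤ (B \ L).card * ∑ x ∈ L, g x + L.card * ∑ x ∈ L, g x := by
        exact Nat.add_le_add_right key _
    _ = B.card * ∑ x ∈ L, g x := by
        rw [hcards, ← Nat.add_mul]
        congr 1
        omega

end EBlemmas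

section Sides

variable {V : Type} [Fintype V] [DecidableEq V] {G : SimpleGraph V} [DecidableRel G.Adj]
  {b c : ℕ → ℕ} {k : ℕ} {A : Set V}

lemma no_inner_edges (hA : ∀ x y : V, G.Adj x y → (x ∈ A ↔ y ∉ A)) {S : Finset V}
    (hS : ∀ a ∈ S, ∀ b' ∈ S, ((a ∈ A) ↔ (b' ∈ A))) : eB G S S = 0 := by
  unfold eB
  rw [Finset.card_eq_zero, Finset.filter_eq_empty_iff]
  rintro ⟨a, b'⟩ hab hadj
  rw [Finset.mem_product] at hab
  have h1 := hA a b' hadj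
  have h2 := hS a hab.1 b' hab.2
  tauto

lemma eB_pair_le {P L : Finset V} (hPL : Disjoint P L) :
    eB G P L + eB G L P ≤ eB G (P ∪ L) (P ∪ L) := by
  have hd : Disjoint ((P ×ˢ L).filter fun p => G.Adj p.1 p.2)
      ((L ×ˢ P).filter fun p => G.Adj p.1 p.2) := by
    rw [Finset.disjoint_left]
    rintro ⟨a, t⟩ h1 h2
    simp only [mem_filter, mem_product] at h1 h2
    exact (Finset.disjoint_left.mp hPL) h1.1.1 h2.1.1
  calc eB G P L + eB G L P
      = (((P ×ˢ L).filter fun p => G.Adj p.1 p.2) ∪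
          ((L ×ˢ P).filter fun p => G.Adj p.1 p.2)).card := (Finset.card_union_of_disjoint hd).symm
    _ ≤ eB G (P ∪ L) (P ∪ L) := by
        apply Finset.card_le_card
        rintro ⟨a, t⟩ h
        rw [Finset.mem_union] at h
        rcases h with h | h <;> simp only [mem_filter, mem_product] at h ⊢ <;>
          exact ⟨⟨Finset.mem_union.mpr (by tauto), Finset.mem_union.mpr (by tauto)⟩, h.2⟩

lemma side_filter_eq (hconn : G.Connected) (hA : ∀ x y : V, G.Adj x y → (x ∈ A ↔ y ∉ A))
    (hdiam1 : ∀ u v : V, G.dist u v ≤ 3) [DecidablePred (· ∈ A)] (x : V) :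
    univ.filter (fun z => ((z ∈ A) ↔ (x ∈ A)))
      = insert x (univ.filter (fun z => G.dist x z = 2)) := by
  ext z
  simp only [mem_filter, mem_univ, true_and, Finset.mem_insert]
  constructor
  · intro h
    have hev : Even (G.dist x z) := (dist_parity hconn hA x z).mp (by tauto)
    have hle := hdiam1 x z
    rw [Nat.even_iff] at hev
    have hd : G.dist x z = 0 ∨ G.dist x z = 2 := by omega
    rcases hd with h0 | h2
    · exact Or.inl (hconn.dist_eq_zero_iff.mp h0).symm
    · exact Or.inr h2
  · rintro (rfl | h2)
    · tauto
    · have hev : Even (G.dist x z) := by rw [h2]; decide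
      have := (dist_parity hconn hA x z).mpr hev
      tauto

lemma sides_card_eq (hdrg : IsDistRegular G 3 b c) (hk : b 0 = k) (hk1 : 1 ≤ k)
    (hA : ∀ x y : V, G.Adj x y → (x ∈ A ↔ y ∉ A)) [DecidablePred (· ∈ A)] :
    (univ.filter (· ∈ A)).card = (univ.filter (· ∈ A))ᶜ.card := by
  set Af := univ.filter (· ∈ A) with hAf
  have hmemAf : ∀ z, z ∈ Af ↔ z ∈ A := by intro z; simp [hAf]
  have hmemC : ∀ z, z ∈ Afᶜ ↔ z ∉ A := by intro z; simp [hAf]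
  have h1 : eB G Af Afᶜ + eB G Af Af = k * Af.card := by
    rw [eB_split, eB_univ_right hdrg hk]
  have h2 : eB G Afᶜ Af + eB G Afᶜ Afᶜ = k * Afᶜ.card := by
    have := eB_split (G := G) Afᶜ Afᶜ
    rw [compl_compl] at this
    rw [← eB_univ_right hdrg hk Afᶜ, ← this, Nat.add_comm]
  have z1 : eB G Af Af = 0 :=
    no_inner_edges hA fun a ha b' hb' => by
      rw [hmemAf] at ha hb'; tauto
  have z2 : eB G Afᶜ Afᶜ = 0 :=
    no_inner_edges hA fun a ha b' hb' => by
      rw [hmemC] at ha hb'; tauto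
  have hcomm : eB G Af Afᶜ = eB G Afᶜ Af := eB_comm _ _
  have : k * Af.card = k * Afᶜ.card := by omega
  exact Nat.eq_of_mul_eq_mul_left (by omega) this

lemma k2_mul_c2 (hconn : G.Connected) (hA : ∀ x y : V, G.Adj x y → (x ∈ A ↔ y ∉ A))
    (hdrg : IsDistRegular G 3 b c) (hk : b 0 = k) (x : V) :
    (univ.filter (fun z => G.dist x z = 2)).card * c 2 = k * (k - 1) := by
  set Γ1 := univ.filter (fun z => G.dist x z = 1) with hΓ1
  set Γ2 := univ.filter (fun z => G.dist x z = 2) with hΓ2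
  have h1 : eB G Γ2 Γ1 = Γ2.card * c 2 := by
    rw [eB_fst_fiber]
    rw [Finset.sum_congr rfl (fun a ha => ?_), Finset.sum_const, smul_eq_mul]
    rw [hΓ2, mem_filter] at ha
    have hc := (hdrg 2 (by norm_num) x a ha.2).1
    rw [natCard_filter] at hc
    rw [← hc]
    congr 1
    rw [hΓ1, Finset.filter_filter]
    ext w
    simp only [mem_filter, mem_univ, true_and]
    tauto
  have h2 : eB G Γ1 Γ2 = k * (k - 1) := by
    rw [eB_fst_fiber]
    rw [Finset.sum_congr rfl (fun y hy => ?_), Finset.sum_const, smul_eq_mul]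
    · congr 1
      rw [hΓ1, filter_dist_one, deg_eq hdrg hk]
    · rw [hΓ1, mem_filter] at hy
      have hyx : G.dist y x = 1 := by rw [SimpleGraph.dist_comm]; exact hy.2
      rw [← CM_d1 hconn hA hdrg hk hyx]
      rw [hΓ2, Finset.filter_filter]
      congr 1
      ext w
      simp only [mem_filter, mem_univ, true_and]
      rw [SimpleGraph.dist_comm (u := x)]
      tauto
  rw [← h1, eB_comm, h2]

end Sides


section ArithAux

lemma aux_gap1 {θ K C : ℝ} (h1 : 1 < θ) (hsq : θ ^ 2 = K - C) : C + 1 < K := by nlinarith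

lemma aux_gap2 {θ K C : ℝ} (h1 : 3 / 2 < θ) (hsq : θ ^ 2 = K - C) : C + 2 < K := by nlinarith

lemma aux_k2ge3 {k k2 c2 : ℕ} (hkk : k2 * c2 + k = k * k) (hck : c2 + 2 ≤ k)
    (hc2 : 1 ≤ c2) (hk3 : 3 ≤ k) : 3 ≤ k2 := by
  by_contra hcon
  push_neg at hcon
  have h1 : k2 * c2 ≤ 2 * c2 := Nat.mul_le_mul_right _ (by omega)
  have h2 : 3 * k ≤ k * k := Nat.mul_le_mul_right _ hk3
  linarith

lemma aux_poly {K C : ℝ} (hC1 : 1 ≤ C) (hCK : C + 3 ≤ K) (hsplit : (K = 4 ∧ C = 1) ∨ 5 ≤ K) :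
    4 * (K - C) * (C + (K * K - K)) ^ 2 ≤ K ^ 2 * (K * K - K) ^ 2 := by
  rcases hsplit with ⟨hK4, hC⟩ | hK5
  · rw [hK4, hC]; norm_num
  · have h0 : (0 : ℝ) ≤ K * (K - 1) := mul_nonneg (by linarith) (by linarith)
    have t0 : 0 ≤ C + (K * K - K) := by nlinarith
    have t1 : C + (K * K - K) ≤ K * K - 3 := by linarith
    have t2 : (C + (K * K - K)) ^ 2 ≤ (K * K - 3) ^ 2 := pow_le_pow_left₀ t0 t1 2
    have t3 : 4 * (K - C) * (C + (K * K - K)) ^ 2 ≤ 4 * (K - C) * (K * K - 3) ^ 2 :=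
      mul_le_mul_of_nonneg_left t2 (by linarith)
    have t3' : 4 * (K - C) * (K * K - 3) ^ 2 ≤ 4 * (K - 1) * (K * K - 3) ^ 2 :=
      mul_le_mul_of_nonneg_right (by linarith) (sq_nonneg _)
    have hKK25 : 25 ≤ K * K := by nlinarith
    have s1 : (K * K - 3) ^ 2 ≤ (K * K) ^ 2 := pow_le_pow_left₀ (by linarith) (by linarith) 2
    have s2 : 4 * (K * K) ^ 2 ≤ K ^ 4 * (K - 1) := by
      have h5 : 0 ≤ K ^ 4 * (K - 5) := mul_nonneg (by positivity) (by linarith)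
      nlinarith [h5]
    have s3 : 4 * (K * K - 3) ^ 2 ≤ K ^ 4 * (K - 1) := by nlinarith [s1]
    have hmul := mul_le_mul_of_nonneg_left s3 (show (0 : ℝ) ≤ K - 1 by linarith)
    calc 4 * (K - C) * (C + (K * K - K)) ^ 2
        ≤ 4 * (K - 1) * (K * K - 3) ^ 2 := le_trans t3 t3'
      _ = (K - 1) * (4 * (K * K - 3) ^ 2) := by ring
      _ ≤ (K - 1) * (K ^ 4 * (K - 1)) := hmul
      _ = K ^ 2 * (K * K - K) ^ 2 := by ring

lemma aux_vm {θ K C vR mR : ℝ} (hsq : θ ^ 2 = K - C)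
    (hB : 4 * (K - C) * vR ^ 2 ≤ K ^ 2 * (vR - 1) ^ 2)
    (hv2 : 2 ≤ vR) (hm2 : vR ≤ 2 * mR + 1) (hK0 : 0 ≤ K) (hm0 : 0 ≤ mR) :
    θ * vR ≤ K * mR := by
  have hKm0 : 0 ≤ K * mR := mul_nonneg hK0 hm0
  apply le_of_pow_le_pow_left₀ two_ne_zero hKm0
  have h1 : (vR - 1) ^ 2 ≤ (2 * mR) ^ 2 := pow_le_pow_left₀ (by linarith) (by linarith) 2
  have h2 := mul_le_mul_of_nonneg_left h1 (sq_nonneg K)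
  calc (θ * vR) ^ 2 = (K - C) * vR ^ 2 := by rw [mul_pow, hsq]
    _ ≤ K ^ 2 * (vR - 1) ^ 2 / 4 := by linarith
    _ ≤ K ^ 2 * (2 * mR) ^ 2 / 4 := by linarith
    _ = (K * mR) ^ 2 := by ring

lemma aux_div {θ K vR mR eR : ℝ} (hC3 : θ * vR ≤ K * mR) (hre : mR * (K * mR) ≤ vR * eR)
    (hv0 : 0 < vR) (hm0 : 0 ≤ mR) : θ * (2 * mR) ≤ 2 * eR := by
  have h1 : θ * (2 * mR) * vR ≤ 2 * (vR * eR) := by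
    nlinarith [mul_le_mul_of_nonneg_left hC3 (show (0 : ℝ) ≤ 2 * mR by linarith), hre]
  by_contra hcon
  push_neg at hcon
  nlinarith [mul_lt_mul_of_pos_right hcon hv0, h1]

end ArithAux

set_option maxHeartbeats 2000000 in
/-- A finite bipartite distance-regular graph of diameter 3 with valency `k` and
second-largest adjacency eigenvalue `θ1` satisfies `h_G ≤ (k - θ1)/k`. -/
theorem stmt_12 {V : Type} [Fintype V] [DecidableEq V] (G : SimpleGraph V) [DecidableRel G.Adj]
    (b c : ℕ → ℕ) (k : ℕ) (hconn : G.Connected)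
    (hdrg : IsDistRegular G 3 b c) (hk : b 0 = k)
    (hdiam : (∀ x y : V, G.dist x y ≤ 3) ∧ ∃ x y : V, G.dist x y = 3)
    (hbip : ∃ A : Set V, ∀ x y : V, G.Adj x y → (x ∈ A ↔ y ∉ A))
    (θ1 : ℝ) (hθ1 : IsSecondLargestAdjEigenvalue G k θ1) :
    cheeger G k ≤ ((k : ℝ) - θ1) / (k : ℝ) := by
  classical
  obtain ⟨A, hA⟩ := hbip
  obtain ⟨hd3, x0, y0, hxy0⟩ := hdiam
  obtain ⟨hev1, hne1, -⟩ := hθ1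
  obtain ⟨z2, ha23, hd2⟩ := dist_pred hconn (show G.dist x0 y0 = 2 + 1 from hxy0)
  obtain ⟨z1, ha12, hd1⟩ := dist_pred hconn (show G.dist x0 z2 = 1 + 1 from hd2)
  have ha01 : G.Adj x0 z1 := SimpleGraph.dist_eq_one_iff_adj.mp hd1
  have hk1 : 1 ≤ k := by
    have hdeg := deg_eq hdrg hk x0
    have hmem : z1 ∈ G.neighborFinset x0 := by
      simp [SimpleGraph.mem_neighborFinset, ha01]
    have := Finset.card_pos.mpr ⟨z1, hmem⟩
    omega
  have ne01 : x0 ≠ z1 := by intro h; rw [← h, SimpleGraph.dist_self] at hd1; omega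
  have ne02 : x0 ≠ z2 := by intro h; rw [← h, SimpleGraph.dist_self] at hd2; omega
  have ne03 : x0 ≠ y0 := by intro h; rw [← h, SimpleGraph.dist_self] at hxy0; omega
  have ne12 : z1 ≠ z2 := by intro h; rw [h] at hd1; omega
  have ne13 : z1 ≠ y0 := by intro h; rw [h] at hd1; omega
  have ne23 : z2 ≠ y0 := by intro h; rw [h] at hd2; omega
  have hc4 : ({x0, z1, z2, y0} : Finset V).card = 4 := by
    rw [Finset.card_insert_of_notMem (by simp [ne01, ne02, ne03]),
      Finset.card_insert_of_notMem (by simp [ne12, ne13]),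
      Finset.card_insert_of_notMem (by simp [ne23]), Finset.card_singleton]
  have hn4 : 4 ≤ Fintype.card V := by
    calc 4 = ({x0, z1, z2, y0} : Finset V).card := hc4.symm
      _ ≤ Fintype.card V := Finset.card_le_univ _
  by_cases hsmall : θ1 ≤ 1
  · -- edge case
    have hS2 : ({x0, z1} : Finset V).card = 2 := by
      rw [Finset.card_insert_of_notMem (by simp [ne01]), Finset.card_singleton]
    apply cheeger_le_of_subset hdrg hk hk1 (S := {x0, z1}) ⟨x0, by simp⟩ (by rw [hS2]; omega)
    have hsub : ({(x0, z1), (z1, x0)} : Finset (V × V)) ⊆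
        (({x0, z1} : Finset V) ×ˢ ({x0, z1} : Finset V)).filter (fun p => G.Adj p.1 p.2) := by
      intro p hp
      simp only [Finset.mem_insert, Finset.mem_singleton] at hp
      rcases hp with rfl | rfl <;>
        simp [Finset.mem_product, ha01, ha01.symm]
    have hcard2 : ({(x0, z1), (z1, x0)} : Finset (V × V)).card = 2 := by
      rw [Finset.card_insert_of_notMem (by simp [Prod.ext_iff, ne01]), Finset.card_singleton]
    have h2n : 2 ≤ eB G {x0, z1} {x0, z1} := by
      rw [← hcard2]; exact Finset.card_le_card hsub
    have h2R : (2 : ℝ) ≤ (eB G {x0, z1} {x0, z1} : ℝ) := by exact_mod_cast h2n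
    rw [hS2]
    push_cast
    linarith
  · push_neg at hsmall
    have hkey := spectral_key hconn hdrg hk hk1 hd3 hA hev1 hne1
    have hkR0 : (0 : ℝ) ≤ (k : ℝ) := Nat.cast_nonneg k
    have hsq : θ1 ^ 2 = (k : ℝ) - (c 2 : ℝ) := by
      rcases mul_eq_zero.mp hkey with h | h
      · linarith
      · linarith
    have hc2pos : 1 ≤ c 2 := by
      have hcc := c2_count hdrg hd2
      have hz1mem : z1 ∈ univ.filter (fun y => G.Adj x0 y ∧ G.Adj y z2) := by
        simp [ha01, ha12]
      have := Finset.card_pos.mpr ⟨z1, hz1mem⟩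
      omega
    have hck2 : c 2 + 2 ≤ k := by
      have h1R : (c 2 : ℝ) + 1 < (k : ℝ) := aux_gap1 hsmall hsq
      have : c 2 + 1 < k := by exact_mod_cast h1R
      omega
    set Af := univ.filter (· ∈ A) with hAfdef
    have hsides : Af.card = Afᶜ.card := sides_card_eq hdrg hk hk1 hA
    have hn2v : Fintype.card V = 2 * Af.card := by
      have := Finset.card_add_card_compl Af
      omega
    set k2 := (univ.filter (fun z => G.dist x0 z = 2)).card with hk2def
    set sX := univ.filter (fun z => ((z ∈ A) ↔ (x0 ∈ A))) with hsXdef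
    have hsXk2 : sX.card = 1 + k2 := by
      have hx0notin : x0 ∉ univ.filter (fun z => G.dist x0 z = 2) := by
        simp [SimpleGraph.dist_self]
      rw [hsXdef, side_filter_eq hconn hA hd3 x0, Finset.card_insert_of_notMem hx0notin]
      omega
    have hsXAf : sX.card = Af.card := by
      by_cases hx0A : x0 ∈ A
      · have : sX = Af := by
          rw [hsXdef, hAfdef]
          ext z
          simp only [mem_filter, mem_univ, true_and]
          tauto
        rw [this]
      · have : sX = Afᶜ := by
          ext z
          rw [hsXdef]
          simp only [mem_filter, mem_univ, true_and, Finset.mem_compl, hAfdef]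
          tauto
        rw [this, ← hsides]
    have hvk2 : Af.card = 1 + k2 := by omega
    have hk2c2 : k2 * c 2 = k * (k - 1) := k2_mul_c2 hconn hA hdrg hk x0
    have hkk : k2 * c 2 + k = k * k := by
      obtain ⟨t, rfl⟩ := Nat.exists_eq_add_of_le hk1
      rw [hk2c2]
      simp [Nat.add_sub_cancel_left]
      ring
    have hk2pos : 1 ≤ k2 := by
      have : z2 ∈ univ.filter (fun z => G.dist x0 z = 2) := by simp [hd2]
      have := Finset.card_pos.mpr ⟨z2, this⟩
      omega
    by_cases hmed : θ1 ≤ 3 / 2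
    · -- geodesic path case
      have hk3 : 3 ≤ k := by omega
      have hk2ge3 : 3 ≤ k2 := aux_k2ge3 hkk hck2 hc2pos hk3
      have hn8 : 8 ≤ Fintype.card V := by omega
      apply cheeger_le_of_subset hdrg hk hk1 (S := {x0, z1, z2, y0}) ⟨x0, by simp⟩
        (by rw [hc4]; omega)
      have hsub : ({(x0, z1), (z1, x0), (z1, z2), (z2, z1), (z2, y0), (y0, z2)} : Finset (V × V)) ⊆
          (({x0, z1, z2, y0} : Finset V) ×ˢ ({x0, z1, z2, y0} : Finset V)).filter
            (fun p => G.Adj p.1 p.2) := by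
        intro p hp
        simp only [Finset.mem_insert, Finset.mem_singleton] at hp
        rcases hp with rfl | rfl | rfl | rfl | rfl | rfl <;>
          simp [Finset.mem_product, ha01, ha01.symm, ha12, ha12.symm, ha23, ha23.symm]
      have hcard6 : ({(x0, z1), (z1, x0), (z1, z2), (z2, z1), (z2, y0), (y0, z2)} :
          Finset (V × V)).card = 6 := by
        rw [Finset.card_insert_of_notMem (by simp [Prod.ext_iff, ne01, ne02, ne03, ne12, ne13, ne23]),
          Finset.card_insert_of_notMem (by simp [Prod.ext_iff, ne01, ne02, ne03, ne12, ne13, ne23]),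
          Finset.card_insert_of_notMem (by simp [Prod.ext_iff, ne01, ne02, ne03, ne12, ne13, ne23]),
          Finset.card_insert_of_notMem (by simp [Prod.ext_iff, ne01, ne02, ne03, ne12, ne13, ne23]),
          Finset.card_insert_of_notMem (by simp [Prod.ext_iff, ne01, ne02, ne03, ne12, ne13, ne23]),
          Finset.card_singleton]
      have h6n : 6 ≤ eB G {x0, z1, z2, y0} {x0, z1, z2, y0} := by
        rw [← hcard6]; exact Finset.card_le_card hsub
      have h6R : (6 : ℝ) ≤ (eB G {x0, z1, z2, y0} {x0, z1, z2, y0} : ℝ) := by exact_mod_cast h6n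
      rw [hc4]
      push_cast
      linarith
    · -- halving case
      push_neg at hmed
      have hck3 : c 2 + 3 ≤ k := by
        have h1 : (c 2 : ℝ) + 2 < (k : ℝ) := aux_gap2 hmed hsq
        have : c 2 + 2 < k := by exact_mod_cast h1
        omega
      have hk4 : 4 ≤ k := by omega
      have hoX : sXᶜ.card = Af.card := by
        have := Finset.card_add_card_compl sX
        omega
      set m := Af.card / 2 with hmdef
      have hm1 : 1 ≤ m := by omega
      obtain ⟨P, hPsub, hPcard⟩ := Finset.exists_subset_card_eq
        (s := sX) (n := m) (by omega)
      have hPuniv : eB G P univ = k * m := by rw [eB_univ_right hdrg hk, hPcard]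
      have hPsX : eB G P sX = 0 := by
        have hz : eB G sX sX = 0 := by
          refine no_inner_edges hA fun a ha b' hb' => ?_
          rw [hsXdef] at ha hb'
          simp only [mem_filter, mem_univ, true_and] at ha hb'
          tauto
        have := eB_mono (G := G) hPsub (le_refl sX)
        omega
      have hPoX : eB G P sXᶜ = k * m := by
        have := eB_split (G := G) P sX
        omega
      obtain ⟨L, hLsub, hLcard, hLtop⟩ := exists_top_subset sXᶜ
        (fun t => (P.filter (fun a => G.Adj a t)).card) m (by omega)
      have hmain_nat : m * (k * m) ≤ Af.card * eB G P L := by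
        calc m * (k * m) = m * eB G P sXᶜ := by rw [hPoX]
          _ = m * ∑ t ∈ sXᶜ, (P.filter (fun a => G.Adj a t)).card := by rw [eB_snd_fiber]
          _ ≤ sXᶜ.card * ∑ t ∈ L, (P.filter (fun a => G.Adj a t)).card := hLtop
          _ = Af.card * eB G P L := by rw [hoX, eB_snd_fiber]
      have hdisj : Disjoint P L := by
        rw [Finset.disjoint_left]
        intro a haP haL
        exact (Finset.mem_compl.mp (hLsub haL)) (hPsub haP)
      have hScard : (P ∪ L).card = 2 * m := by
        rw [Finset.card_union_of_disjoint hdisj, hPcard, hLcard]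
        omega
      have hSne : (P ∪ L).Nonempty := by
        rw [← Finset.card_pos, hScard]; omega
      have hEB2 : 2 * eB G P L ≤ eB G (P ∪ L) (P ∪ L) := by
        have h1 := eB_pair_le (G := G) hdisj
        have h2 := eB_comm (G := G) L P
        omega
      apply cheeger_le_of_subset hdrg hk hk1 hSne (by rw [hScard]; omega)
      rw [hScard]
      -- real arithmetic
      have hC1 : (1 : ℝ) ≤ (c 2 : ℝ) := by exact_mod_cast hc2pos
      have hCK : (c 2 : ℝ) + 3 ≤ (k : ℝ) := by exact_mod_cast hck3
      have hK4 : (4 : ℝ) ≤ (k : ℝ) := by exact_mod_cast hk4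
      have hvR : (Af.card : ℝ) = 1 + (k2 : ℝ) := by exact_mod_cast hvk2
      have hrv : (k2 : ℝ) * (c 2 : ℝ) + (k : ℝ) = (k : ℝ) * (k : ℝ) := by exact_mod_cast hkk
      have hm2 : (Af.card : ℝ) ≤ 2 * (m : ℝ) + 1 := by
        have : Af.card ≤ 2 * m + 1 := by omega
        exact_mod_cast this
      have hmv : 2 * (m : ℝ) ≤ (Af.card : ℝ) := by
        have : 2 * m ≤ Af.card := by omega
        exact_mod_cast this
      have hre : (m : ℝ) * ((k : ℝ) * (m : ℝ)) ≤ (Af.card : ℝ) * (eB G P L : ℝ) := by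
        exact_mod_cast hmain_nat
      have hv0 : (0 : ℝ) < (Af.card : ℝ) := by
        have : 0 < Af.card := by omega
        exact_mod_cast this
      have hv2 : (2 : ℝ) ≤ (Af.card : ℝ) := by
        have : 2 ≤ Af.card := by omega
        exact_mod_cast this
      have hm0 : (0 : ℝ) < (m : ℝ) := by
        have : 0 < m := hm1
        exact_mod_cast this
      set K := (k : ℝ) with hKdef
      set C := (c 2 : ℝ) with hCdef
      -- key polynomial inequality
      have h6 : 4 * (K - C) * (C + (K * K - K)) ^ 2 ≤ K ^ 2 * (K * K - K) ^ 2 := by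
        apply aux_poly hC1 hCK
        rcases Nat.lt_or_ge k 5 with hklt | hkge
        · left
          have hk4' : k = 4 := by omega
          have hc2' : c 2 = 1 := by omega
          constructor
          · rw [hKdef, hk4']; norm_num
          · rw [hCdef, hc2']; norm_num
        · right
          rw [hKdef]
          exact_mod_cast hkge
      have hCv : C * (Af.card : ℝ) = C + (K * K - K) := by
        linear_combination C * hvR + hrv
      have hCv1 : C * ((Af.card : ℝ) - 1) = K * K - K := by
        linear_combination C * hvR + hrv
      have hB : 4 * (K - C) * (Af.card : ℝ) ^ 2 ≤ K ^ 2 * ((Af.card : ℝ) - 1) ^ 2 := by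
        have hfin : (4 * (K - C) * (Af.card : ℝ) ^ 2) * C ^ 2
            ≤ (K ^ 2 * ((Af.card : ℝ) - 1) ^ 2) * C ^ 2 := by
          calc (4 * (K - C) * (Af.card : ℝ) ^ 2) * C ^ 2
              = 4 * (K - C) * (C * (Af.card : ℝ)) ^ 2 := by ring
            _ ≤ K ^ 2 * (K * K - K) ^ 2 := by rw [hCv]; exact h6
            _ = K ^ 2 * (C * ((Af.card : ℝ) - 1)) ^ 2 := by rw [hCv1]
            _ = (K ^ 2 * ((Af.card : ℝ) - 1) ^ 2) * C ^ 2 := by ring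
        have hC2 : (0 : ℝ) < C ^ 2 := by positivity
        exact le_of_mul_le_mul_right hfin hC2
      have hC3 : θ1 * (Af.card : ℝ) ≤ K * (m : ℝ) :=
        aux_vm hsq hB hv2 hm2 (by rw [hKdef]; positivity) (le_of_lt hm0)
      have hEB2R : 2 * (eB G P L : ℝ) ≤ (eB G (P ∪ L) (P ∪ L) : ℝ) := by exact_mod_cast hEB2
      have hfinal : θ1 * (2 * (m : ℝ)) ≤ 2 * (eB G P L : ℝ) :=
        aux_div hC3 hre hv0 (le_of_lt hm0)
      push_cast
      linarith
end
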